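/- Let (Γ, σ) be a finite measure space, j : ℝ → ℝ locally Lipschitz with ∂j satisfying the growth condition |ξ| ≤ c₁ + c₂|u|. Suppose uₙ → u strongly in L²(Γ), uₙ(x) → u(x) a.e. with |uₙ(x)| ≤ h(x) for some h ∈ L²(Γ), and ξₙ → ξ weakly in L²(Γ) with ξₙ(x) ∈ ∂j(uₙ(x)) a.e. for each n. Then ξ(x) ∈ ∂j(u(x)) for a.e. x ∈ Γ. -/

import Mathlib

open MeasureTheory Filter Set
open scoped ENNReal NNReal

noncomputable def clarkeDirDeriv (j : ℝ → ℝ) (u v : ℝ) : ℝ :=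
  Filter.limsup (fun p : ℝ × ℝ => (j (p.1 + p.2 * v) - j p.1) / p.2)
    ((nhds u) ×ˢ (nhdsWithin 0 (Set.Ioi 0)))

noncomputable def clarkeSubdiff (j : ℝ → ℝ) (u : ℝ) : Set ℝ :=
  {ξ : ℝ | ∀ v : ℝ, ξ * v ≤ clarkeDirDeriv j u v}

namespace ClarkeAux

noncomputable def Q (j : ℝ → ℝ) (v : ℝ) : ℝ × ℝ → ℝ := fun p => (j (p.1 + p.2 * v) - j p.1) / p.2

noncomputable def Fl (w : ℝ) : Filter (ℝ × ℝ) := (nhds w) ×ˢ (nhdsWithin 0 (Set.Ioi 0))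

instance (w : ℝ) : (Fl w).NeBot := by
  unfold Fl; infer_instance

lemma cdd_eq (j : ℝ → ℝ) (w v : ℝ) : clarkeDirDeriv j w v = limsup (Q j v) (Fl w) := rfl

/-- local boundedness of the difference quotients -/
lemma exists_bound (j : ℝ → ℝ) (hj : LocallyLipschitz j) (w v : ℝ) :
    ∃ K : ℝ, 0 ≤ K ∧ ∀ᶠ p in Fl w, |Q j v p| ≤ K := by
  obtain ⟨K, t, ht, hK⟩ := hj w
  obtain ⟨ε, hε, hball⟩ := Metric.mem_nhds_iff.1 ht
  refine ⟨K * |v|, by positivity, ?_⟩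
  have h1 : Metric.ball w (ε/2) ∈ nhds w := Metric.ball_mem_nhds _ (by positivity)
  have h2 : Ioo (0:ℝ) (ε/(2*(|v|+1))) ∈ nhdsWithin 0 (Ioi 0) :=
    Ioo_mem_nhdsGT_of_mem ⟨le_refl _, by positivity⟩
  filter_upwards [Filter.prod_mem_prod h1 h2] with p hp
  obtain ⟨hp1, hp2⟩ := hp
  have hv : |v| < |v| + 1 := by linarith
  have hp2' : 0 < p.2 := hp2.1
  have habs : |p.2 * v| ≤ ε/2 := by
    rw [abs_mul, abs_of_pos hp2']
    calc p.2 * |v| ≤ (ε/(2*(|v|+1))) * |v| := by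
          apply mul_le_mul_of_nonneg_right hp2.2.le (abs_nonneg v)
      _ ≤ ε/2 := by
          rw [div_mul_eq_mul_div, div_le_div_iff₀ (by positivity) (by norm_num)]
          nlinarith [abs_nonneg v]
  have hm1 : p.1 ∈ t := hball (by
    have := mem_ball_iff_norm.1 hp1
    exact Metric.mem_ball.2 (lt_of_lt_of_le hp1 (by linarith)))
  have hm2 : p.1 + p.2 * v ∈ t := by
    apply hball
    rw [Metric.mem_ball, Real.dist_eq]
    have : |p.1 + p.2 * v - w| ≤ |p.1 - w| + |p.2 * v| := by
      have := abs_add_le (p.1 - w) (p.2 * v); rwa [sub_add_eq_add_sub] at this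
    have hd : |p.1 - w| < ε/2 := by rw [← Real.dist_eq]; exact hp1
    linarith
  have hd := hK.dist_le_mul _ hm2 _ hm1
  rw [Real.dist_eq, Real.dist_eq] at hd
  have hd2 : |j (p.1 + p.2 * v) - j p.1| ≤ K * (p.2 * |v|) := by
    have : |p.1 + p.2 * v - p.1| = p.2 * |v| := by
      rw [add_sub_cancel_left, abs_mul, abs_of_pos hp2']
    rw [this] at hd; exact hd
  have : |Q j v p| = |j (p.1 + p.2 * v) - j p.1| / p.2 := by
    rw [Q, abs_div, abs_of_pos hp2']
  rw [this, div_le_iff₀ hp2']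
  calc |j (p.1 + p.2 * v) - j p.1| ≤ K * (p.2 * |v|) := hd2
    _ = (K * |v|) * p.2 := by ring


section
variable {j : ℝ → ℝ} {w v c : ℝ}

lemma bddAbove_Q (h : ∀ᶠ p in Fl w, |Q j v p| ≤ c) :
    IsBoundedUnder (· ≤ ·) (Fl w) (Q j v) :=
  isBoundedUnder_of_eventually_le (h.mono fun p hp => (abs_le.1 hp).2)

lemma bddBelow_Q (h : ∀ᶠ p in Fl w, |Q j v p| ≤ c) :
    IsBoundedUnder (· ≥ ·) (Fl w) (Q j v) :=
  isBoundedUnder_of_eventually_ge (h.mono fun p hp => (abs_le.1 hp).1)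

lemma cobddAbove_Q (h : ∀ᶠ p in Fl w, |Q j v p| ≤ c) :
    IsCoboundedUnder (· ≤ ·) (Fl w) (Q j v) :=
  (bddBelow_Q h).isCoboundedUnder_le

lemma cobddBelow_Q (h : ∀ᶠ p in Fl w, |Q j v p| ≤ c) :
    IsCoboundedUnder (· ≥ ·) (Fl w) (Q j v) :=
  (bddAbove_Q h).isCoboundedUnder_ge

/-- |limsup| bound -/
lemma abs_limsup_le (h : ∀ᶠ p in Fl w, |Q j v p| ≤ c) :
    |limsup (Q j v) (Fl w)| ≤ c := by
  rw [abs_le]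
  constructor
  · exact le_limsup_of_frequently_le ((h.mono fun p hp => (abs_le.1 hp).1).frequently)
      (bddAbove_Q h)
  · exact limsup_le_of_le (cobddAbove_Q h) (h.mono fun p hp => (abs_le.1 hp).2)

lemma cdd_zero (j : ℝ → ℝ) (w : ℝ) : clarkeDirDeriv j w 0 = 0 := by
  have : (fun p : ℝ × ℝ => (j (p.1 + p.2 * 0) - j p.1) / p.2) = fun _ => (0:ℝ) := by
    funext p; simp
  rw [clarkeDirDeriv, this]
  exact limsup_const 0

end


lemma map_mul_nhdsWithin {c : ℝ} (hc : 0 < c) :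
    map (fun x => c * x) (nhdsWithin 0 (Ioi 0)) = nhdsWithin (0:ℝ) (Ioi 0) := by
  have h := ((Homeomorph.mulLeft₀ c hc.ne').isEmbedding).map_nhdsWithin_eq (Ioi 0) 0
  have hcoe : ⇑(Homeomorph.mulLeft₀ c hc.ne') = fun x => c * x := by
    funext x; rfl
  rw [hcoe] at h
  have himg : (fun x => c * x) '' (Ioi (0:ℝ)) = Ioi 0 := by
    ext x
    constructor
    · rintro ⟨y, hy, rfl⟩; exact mul_pos hc hy
    · intro hx
      exact ⟨c⁻¹ * x, mul_pos (inv_pos.2 hc) hx, by field_simp⟩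
  rw [himg] at h
  simpa using h

lemma map_scale {w c : ℝ} (hc : 0 < c) :
    map (fun p : ℝ × ℝ => (p.1, c * p.2)) (Fl w) = Fl w := by
  have : (fun p : ℝ × ℝ => (p.1, c * p.2)) = Prod.map id (fun x => c * x) := rfl
  rw [Fl, this, ← prod_map_right, map_mul_nhdsWithin hc]

lemma homog (j : ℝ → ℝ) (hj : LocallyLipschitz j) (w v : ℝ) {c : ℝ} (hc : 0 < c) :
    clarkeDirDeriv j w (c * v) = c * clarkeDirDeriv j w v := by
  have hpt : Q j (c * v)
      = ((fun x => c * x) ∘ (Q j v)) ∘ (fun p : ℝ × ℝ => (p.1, c * p.2)) := by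
    funext p
    simp only [Q, Function.comp_apply]
    have h1 : p.2 * (c * v) = (c * p.2) * v := by ring
    rw [h1, mul_div_assoc', mul_div_mul_left _ _ hc.ne']
  calc clarkeDirDeriv j w (c * v)
      = limsup (((fun x => c * x) ∘ (Q j v)) ∘ (fun p : ℝ × ℝ => (p.1, c * p.2))) (Fl w) := by
        rw [cdd_eq, hpt]
    _ = limsup ((fun x => c * x) ∘ (Q j v)) (map (fun p : ℝ × ℝ => (p.1, c * p.2)) (Fl w)) := by
        rw [Filter.limsup, Filter.limsup, Filter.map_map]
    _ = limsup ((fun x => c * x) ∘ (Q j v)) (Fl w) := by rw [map_scale hc]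
    _ = c * limsup (Q j v) (Fl w) := by
        refine (Monotone.map_limsup_of_continuousAt (f := fun x => c * x)
          (fun a b hab => mul_le_mul_of_nonneg_left hab hc.le) (Q j v)
          ((continuous_mul_left c).continuousAt) ?_ ?_).symm
        · obtain ⟨K, hK0, hK⟩ := exists_bound j hj w v
          exact bddAbove_Q hK
        · obtain ⟨K, hK0, hK⟩ := exists_bound j hj w v
          exact cobddAbove_Q hK
    _ = c * clarkeDirDeriv j w v := by rw [cdd_eq]


lemma tendsto_shift (w v : ℝ) :
    Tendsto (fun p : ℝ × ℝ => (p.1 + p.2 * v, p.2)) (Fl w) (Fl w) := by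
  rw [Fl]
  refine Filter.Tendsto.prodMk ?_ tendsto_snd
  have h2 : Tendsto (fun p : ℝ × ℝ => p.2) (Fl w) (nhds 0) :=
    tendsto_snd.mono_right nhdsWithin_le_nhds
  have := (tendsto_fst.add (h2.mul_const v))
  simpa using this

lemma subadd (j : ℝ → ℝ) (hj : LocallyLipschitz j) (w v v' : ℝ) :
    clarkeDirDeriv j w (v + v') ≤ clarkeDirDeriv j w v + clarkeDirDeriv j w v' := by
  obtain ⟨K, hK0, hK⟩ := exists_bound j hj w v
  obtain ⟨K', hK0', hK'⟩ := exists_bound j hj w v'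
  set T : ℝ × ℝ → ℝ × ℝ := fun p => (p.1 + p.2 * v, p.2) with hT
  have hKT : ∀ᶠ p in Fl w, |Q j v' (T p)| ≤ K' := (tendsto_shift w v).eventually hK'
  have hpt : Q j (v + v') = fun p => Q j v p + Q j v' (T p) := by
    funext p
    simp only [Q, hT]
    rw [← add_div]
    congr 1
    have : p.1 + p.2 * v + p.2 * v' = p.1 + p.2 * (v + v') := by ring
    rw [this]
    ring
  rw [cdd_eq, hpt]
  have step1 : limsup (fun p => Q j v p + Q j v' (T p)) (Fl w)
      ≤ limsup (Q j v) (Fl w) + limsup (fun p => Q j v' (T p)) (Fl w) := by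
    refine limsup_add_le (bddBelow_Q hK) (bddAbove_Q hK) ?_ ?_
    · exact (isBoundedUnder_of_eventually_ge
        (hKT.mono fun p hp => (abs_le.1 hp).1)).isCoboundedUnder_le
    · exact isBoundedUnder_of_eventually_le (hKT.mono fun p hp => (abs_le.1 hp).2)
  have step2 : limsup (fun p => Q j v' (T p)) (Fl w) ≤ limsup (Q j v') (Fl w) := by
    have hmap : limsup (fun p => Q j v' (T p)) (Fl w) = limsup (Q j v') (map T (Fl w)) := by
      rw [Filter.limsup, Filter.limsup, Filter.map_map]; rfl
    rw [hmap]
    refine limsup_le_limsup_of_le (tendsto_shift w v) ?_ (bddAbove_Q hK')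
    have : ∀ᶠ x in map T (Fl w), -K' ≤ Q j v' x := by
      rw [eventually_map]
      exact hKT.mono fun p hp => (abs_le.1 hp).1
    exact (Filter.isBoundedUnder_of_eventually_ge this).isCoboundedUnder_le
  calc limsup (fun p => Q j v p + Q j v' (T p)) (Fl w)
      ≤ limsup (Q j v) (Fl w) + limsup (fun p => Q j v' (T p)) (Fl w) := step1
    _ ≤ limsup (Q j v) (Fl w) + limsup (Q j v') (Fl w) := by linarith
    _ = clarkeDirDeriv j w v + clarkeDirDeriv j w v' := by rw [cdd_eq, cdd_eq]

lemma cdd_one_mem (j : ℝ → ℝ) (hj : LocallyLipschitz j) (w : ℝ) :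
    clarkeDirDeriv j w 1 ∈ clarkeSubdiff j w := by
  intro v
  rcases lt_trichotomy v 0 with hv | rfl | hv
  · have hsub := subadd j hj w v (-v)
    rw [add_neg_cancel, cdd_zero] at hsub
    have hh : clarkeDirDeriv j w (-v) = (-v) * clarkeDirDeriv j w 1 := by
      have := homog j hj w 1 (c := -v) (by linarith)
      rw [mul_one] at this
      exact this
    rw [hh] at hsub
    nlinarith [hsub]
  · rw [cdd_zero]; simp
  · have hh : clarkeDirDeriv j w v = v * clarkeDirDeriv j w 1 := by
      have := homog j hj w 1 (c := v) hv
      rw [mul_one] at this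
      exact this
    rw [hh, mul_comm]

lemma neg_cdd_neg_one_mem (j : ℝ → ℝ) (hj : LocallyLipschitz j) (w : ℝ) :
    -clarkeDirDeriv j w (-1) ∈ clarkeSubdiff j w := by
  intro v
  rcases lt_trichotomy v 0 with hv | rfl | hv
  · have hh : clarkeDirDeriv j w v = (-v) * clarkeDirDeriv j w (-1) := by
      have := homog j hj w (-1) (c := -v) (by linarith)
      have h2 : -v * -1 = v := by ring
      rw [h2] at this
      exact this
    rw [hh]
    nlinarith [hh]
  · rw [cdd_zero]; simp
  · have hsub := subadd j hj w v (-v)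
    rw [add_neg_cancel, cdd_zero] at hsub
    have hh : clarkeDirDeriv j w (-v) = v * clarkeDirDeriv j w (-1) := by
      have := homog j hj w (-1) (c := v) hv
      have h2 : v * -1 = -v := by ring
      rw [h2] at this
      exact this
    rw [hh] at hsub
    nlinarith [hsub]

lemma mem_of_pair (j : ℝ → ℝ) (hj : LocallyLipschitz j) {w ξ : ℝ}
    (h1 : ξ * 1 ≤ clarkeDirDeriv j w 1) (h2 : ξ * (-1) ≤ clarkeDirDeriv j w (-1)) :
    ξ ∈ clarkeSubdiff j w := by
  intro v
  rcases lt_trichotomy v 0 with hv | rfl | hv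
  · have hh : clarkeDirDeriv j w v = (-v) * clarkeDirDeriv j w (-1) := by
      have := homog j hj w (-1) (c := -v) (by linarith)
      have h3 : -v * -1 = v := by ring
      rw [h3] at this
      exact this
    rw [hh]
    nlinarith [h2]
  · rw [cdd_zero]; simp
  · have hh : clarkeDirDeriv j w v = v * clarkeDirDeriv j w 1 := by
      have := homog j hj w 1 (c := v) hv
      rw [mul_one] at this
      exact this
    rw [hh]
    nlinarith [h1]

lemma abs_cdd_le (j : ℝ → ℝ) (hj : LocallyLipschitz j) {c₁ c₂ : ℝ}
    (hgrowth : ∀ u ξ : ℝ, ξ ∈ clarkeSubdiff j u → |ξ| ≤ c₁ + c₂ * |u|)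
    (w v : ℝ) : |clarkeDirDeriv j w v| ≤ |v| * (c₁ + c₂ * |w|) := by
  have hpos : 0 ≤ c₁ + c₂ * |w| := by
    have := hgrowth w _ (cdd_one_mem j hj w)
    exact le_trans (abs_nonneg _) this
  rcases lt_trichotomy v 0 with hv | rfl | hv
  · have hh : clarkeDirDeriv j w v = (-v) * clarkeDirDeriv j w (-1) := by
      have := homog j hj w (-1) (c := -v) (by linarith)
      have h3 : -v * -1 = v := by ring
      rw [h3] at this; exact this
    have hb : |clarkeDirDeriv j w (-1)| ≤ c₁ + c₂ * |w| := by
      have := hgrowth w _ (neg_cdd_neg_one_mem j hj w)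
      rwa [abs_neg] at this
    rw [hh, abs_mul, abs_of_pos (by linarith : (0:ℝ) < -v)]
    have : |v| = -v := abs_of_neg hv
    rw [this]
    exact mul_le_mul_of_nonneg_left hb (by linarith)
  · rw [cdd_zero]; simp
  · have hh : clarkeDirDeriv j w v = v * clarkeDirDeriv j w 1 := by
      have := homog j hj w 1 (c := v) hv
      rw [mul_one] at this; exact this
    have hb : |clarkeDirDeriv j w 1| ≤ c₁ + c₂ * |w| := hgrowth w _ (cdd_one_mem j hj w)
    rw [hh, abs_mul, abs_of_pos hv]
    exact mul_le_mul_of_nonneg_left hb hv.le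

lemma usc_cdd (j : ℝ → ℝ) (hj : LocallyLipschitz j) (v : ℝ) :
    UpperSemicontinuous (fun w => clarkeDirDeriv j w v) := by
  intro w r hr
  simp only at hr
  set L := clarkeDirDeriv j w v with hL
  obtain ⟨K, hK0, hK⟩ := exists_bound j hj w v
  have hmid : limsup (Q j v) (Fl w) < (L + r)/2 := by
    rw [← cdd_eq]; simp only [← hL]; linarith
  have hev : ∀ᶠ p in Fl w, Q j v p < (L + r)/2 :=
    eventually_lt_of_limsup_lt hmid (bddAbove_Q hK)
  rw [Fl, eventually_prod_iff] at hev
  obtain ⟨pa, hpa, pb, hpb, hcomb⟩ := hev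
  obtain ⟨U, hUs, hUopen, hwU⟩ := mem_nhds_iff.1 hpa
  filter_upwards [hUopen.mem_nhds hwU] with w' hw'
  have hev' : ∀ᶠ p in Fl w', Q j v p < (L + r)/2 := by
    rw [Fl, eventually_prod_iff]
    exact ⟨pa, Filter.mem_of_superset (hUopen.mem_nhds hw') hUs, pb, hpb, @hcomb⟩
  obtain ⟨K', hK0', hK'⟩ := exists_bound j hj w' v
  have : clarkeDirDeriv j w' v ≤ (L + r)/2 := by
    rw [cdd_eq]
    exact limsup_le_of_le (cobddAbove_Q hK') (hev'.mono fun p hp => hp.le)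
  calc clarkeDirDeriv j w' v ≤ (L + r)/2 := this
    _ < r := by linarith

lemma limsup_seq_le (j : ℝ → ℝ) (hj : LocallyLipschitz j) (v : ℝ)
    {wseq : ℕ → ℝ} {w : ℝ} (hw : Tendsto wseq atTop (nhds w))
    (hcb : IsCoboundedUnder (· ≤ ·) atTop (fun n => clarkeDirDeriv j (wseq n) v)) :
    limsup (fun n => clarkeDirDeriv j (wseq n) v) atTop ≤ clarkeDirDeriv j w v := by
  refine le_of_forall_gt_imp_ge_of_dense fun r hr => ?_
  have husc := usc_cdd j hj v w r hr
  have hev : ∀ᶠ n in atTop, clarkeDirDeriv j (wseq n) v < r := hw.eventually husc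
  exact limsup_le_of_le hcb (hev.mono fun n hn => hn.le)

lemma key
    {Γ : Type*} [MeasurableSpace Γ] (σ : Measure Γ) [IsFiniteMeasure σ]
    (j : ℝ → ℝ) (hj : LocallyLipschitz j)
    (c₁ c₂ : ℝ)
    (hc₂ : 0 < c₂)
    (hgrowth : ∀ u ξ : ℝ, ξ ∈ clarkeSubdiff j u → |ξ| ≤ c₁ + c₂ * |u|)
    (un : ℕ → Lp ℝ 2 σ) (u : Lp ℝ 2 σ) (h : Lp ℝ 2 σ)
    (ξn : ℕ → Lp ℝ 2 σ) (ξ : Lp ℝ 2 σ)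
    (hae : ∀ᵐ x ∂σ, Tendsto (fun n => un n x) atTop (nhds (u x)))
    (hdom : ∀ n : ℕ, ∀ᵐ x ∂σ, |un n x| ≤ h x)
    (hweak : ∀ g : Lp ℝ 2 σ,
      Tendsto (fun n => ∫ x, ξn n x * g x ∂σ) atTop (nhds (∫ x, ξ x * g x ∂σ)))
    (hsel : ∀ n : ℕ, ∀ᵐ x ∂σ, ξn n x ∈ clarkeSubdiff j (un n x)) (v : ℝ) :
    ∀ᵐ x ∂σ, ξ x * v ≤ clarkeDirDeriv j (u x) v := by
  classical
  have hone : (1:ℝ≥0∞) ≤ 2 := by norm_num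
  have h_int : Integrable (fun x => h x) σ := (Lp.memLp h).integrable hone
  have hu_int : Integrable (fun x => u x) σ := (Lp.memLp u).integrable hone
  have hun_int : ∀ n, Integrable (fun x => un n x) σ := fun n => (Lp.memLp (un n)).integrable hone
  have hξn_int : ∀ n, Integrable (fun x => ξn n x) σ := fun n => (Lp.memLp (ξn n)).integrable hone
  have hξ_int : Integrable (fun x => ξ x) σ := (Lp.memLp ξ).integrable hone
  set Φ : ℝ → ℝ := fun w => clarkeDirDeriv j w v with hΦdef
  have hΦm : Measurable Φ := (usc_cdd j hj v).measurable
  have hΦabs : ∀ w, |Φ w| ≤ |v| * c₁ + |v| * c₂ * |w| := by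
    intro w
    calc |Φ w| ≤ |v| * (c₁ + c₂ * |w|) := abs_cdd_le j hj hgrowth w v
      _ = |v| * c₁ + |v| * c₂ * |w| := by ring
  set B : Γ → ℝ := fun x => |v| * c₁ + |v| * c₂ * h x with hBdef
  have hB_int : Integrable B σ := (integrable_const (|v| * c₁)).add (h_int.const_mul (|v| * c₂))
  have hvc₂ : 0 ≤ |v| * c₂ ∨ True := Or.inr trivial
  have hφ_meas : ∀ n, AEStronglyMeasurable (fun x => Φ (un n x)) σ := fun n =>
    (hΦm.comp_aemeasurable (Lp.aestronglyMeasurable (un n)).aemeasurable).aestronglyMeasurable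
  have hφ_int : ∀ n, Integrable (fun x => Φ (un n x)) σ := fun n =>
    Integrable.mono' ((integrable_const (|v| * c₁)).add ((hun_int n).abs.const_mul (|v| * c₂)))
      (hφ_meas n)
      (Eventually.of_forall fun x => by
        simpa [Real.norm_eq_abs] using hΦabs (un n x))
  have hΦu_int : Integrable (fun x => Φ (u x)) σ :=
    Integrable.mono' ((integrable_const (|v| * c₁)).add (hu_int.abs.const_mul (|v| * c₂)))
      ((hΦm.comp_aemeasurable (Lp.aestronglyMeasurable u).aemeasurable).aestronglyMeasurable)
      (Eventually.of_forall fun x => by simpa [Real.norm_eq_abs] using hΦabs (u x))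
  have hdom' : ∀ᵐ x ∂σ, ∀ n, |un n x| ≤ h x := ae_all_iff.2 hdom
  have hφB : ∀ᵐ x ∂σ, ∀ n, |Φ (un n x)| ≤ B x := by
    filter_upwards [hdom'] with x hx n
    have h0 : (0:ℝ) ≤ |v| * c₂ ∨ |v| * c₂ < 0 := le_or_gt _ _
    calc |Φ (un n x)| ≤ |v| * c₁ + |v| * c₂ * |un n x| := hΦabs _
      _ ≤ B x := by
          simp only [hBdef]
          have h1 := hx n
          have h2 : (0:ℝ) ≤ |v| * c₂ * (h x - |un n x|) :=
            mul_nonneg (mul_nonneg (abs_nonneg v) hc₂.le) (by linarith)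
          nlinarith [abs_nonneg (un n x)]
  have hlimpt : ∀ᵐ x ∂σ, limsup (fun n => Φ (un n x)) atTop ≤ Φ (u x) := by
    filter_upwards [hae, hφB] with x hx hbx
    refine limsup_seq_le j hj v hx ?_
    exact (isBoundedUnder_of_eventually_ge
      (Eventually.of_forall fun n => (abs_le.1 (hbx n)).1)).isCoboundedUnder_le
  have huh : ∀ᵐ x ∂σ, |u x| ≤ h x := by
    filter_upwards [hae, hdom'] with x hx hdx
    exact le_of_tendsto ((continuous_abs.tendsto _).comp hx) (Eventually.of_forall hdx)
  have hΦuB : ∀ᵐ x ∂σ, Φ (u x) ≤ B x := by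
    filter_upwards [huh] with x hx
    have h1 := (abs_le.1 (hΦabs (u x))).2
    have h2 : (0:ℝ) ≤ |v| * c₂ * (h x - |u x|) :=
      mul_nonneg (mul_nonneg (abs_nonneg v) hc₂.le) (by linarith)
    simp only [hBdef]
    nlinarith [abs_nonneg (u x)]
  have hmain : ∀ s, MeasurableSet s → σ s < ⊤ →
      0 ≤ ∫ x in s, (Φ (u x) - ξ x * v) ∂σ := by
    intro s hs hsfin
    set g : Lp ℝ 2 σ := indicatorConstLp 2 hs hsfin.ne v with hgdef
    have hgae : ⇑g =ᵐ[σ] s.indicator fun _ => v := indicatorConstLp_coeFn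
    have hI : ∀ η : Lp ℝ 2 σ, ∫ x, η x * g x ∂σ = ∫ x in s, η x * v ∂σ := by
      intro η
      rw [← integral_indicator hs]
      refine integral_congr_ae ?_
      filter_upwards [hgae] with x hx
      rw [hx]
      by_cases hxs : x ∈ s <;> simp [hxs]
    have hwk : Tendsto (fun n => ∫ x in s, ξn n x * v ∂σ) atTop
        (nhds (∫ x in s, ξ x * v ∂σ)) := by
      have h1 := hweak g
      have h2 : (fun n => ∫ x, ξn n x * g x ∂σ) = fun n => ∫ x in s, ξn n x * v ∂σ :=
        funext fun n => hI (ξn n)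
      rw [h2, hI ξ] at h1
      exact h1
    set a : ℕ → ℝ := fun n => ∫ x in s, Φ (un n x) ∂σ with hadef
    have hφ_intOn : ∀ n, IntegrableOn (fun x => Φ (un n x)) s σ := fun n => (hφ_int n).integrableOn
    have hBintOn : IntegrableOn B s σ := hB_int.integrableOn
    have hΦuintOn : IntegrableOn (fun x => Φ (u x)) s σ := hΦu_int.integrableOn
    have hstep2 : ∀ n, ∫ x in s, ξn n x * v ∂σ ≤ a n := fun n =>
      setIntegral_mono_ae ((hξn_int n).mul_const v).integrableOn (hφ_intOn n)
        ((hsel n).mono fun x hx => hx v)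
    have hstep3 : ∀ n, a n ≤ ∫ x in s, B x ∂σ := fun n =>
      setIntegral_mono_ae (hφ_intOn n) hBintOn
        (hφB.mono fun x hx => (abs_le.1 (hx n)).2)
    have hstep3' : ∀ n, -∫ x in s, B x ∂σ ≤ a n := by
      intro n
      have h1 : ∫ x in s, -B x ∂σ ≤ a n :=
        setIntegral_mono_ae hBintOn.neg (hφ_intOn n)
          (hφB.mono fun x hx => (abs_le.1 (hx n)).1)
      simpa [integral_neg] using h1
    have hbddA : IsBoundedUnder (· ≤ ·) atTop a :=
      isBoundedUnder_of_eventually_le (Eventually.of_forall hstep3)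
    have hbddA' : IsBoundedUnder (· ≥ ·) atTop a :=
      isBoundedUnder_of_eventually_ge (Eventually.of_forall hstep3')
    have hpart1 : ∫ x in s, ξ x * v ∂σ ≤ limsup a atTop := by
      have h1 : limsup (fun n => ∫ x in s, ξn n x * v ∂σ) atTop = ∫ x in s, ξ x * v ∂σ :=
        hwk.limsup_eq
      rw [← h1]
      exact limsup_le_limsup (Eventually.of_forall hstep2) hwk.isCoboundedUnder_le hbddA
    -- reverse Fatou part
    set Ib : ℝ := ∫ x in s, B x ∂σ with hIbdef
    set c : ℕ → ℝ := fun n => ∫ x in s, (B x - Φ (un n x)) ∂σ with hcdef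
    have hgint : ∀ n, IntegrableOn (fun x => B x - Φ (un n x)) s σ := fun n =>
      hBintOn.sub (hφ_intOn n)
    have hcdiff : ∀ n, c n = Ib - a n := fun n => integral_sub hBintOn (hφ_intOn n)
    have hgnn : ∀ n, 0 ≤ᵐ[σ.restrict s] fun x => B x - Φ (un n x) := fun n =>
      ae_restrict_of_ae (hφB.mono fun x hx => by
        have := (abs_le.1 (hx n)).2; simp only [Pi.zero_apply]; linarith)
    have hoR : ∀ n, ENNReal.ofReal (c n)
        = ∫⁻ x in s, ENNReal.ofReal (B x - Φ (un n x)) ∂σ := fun n =>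
      ofReal_integral_eq_lintegral_ofReal (hgint n) (hgnn n)
    have hpt : ∀ᵐ x ∂σ, ENNReal.ofReal (B x - Φ (u x))
        ≤ liminf (fun n => ENNReal.ofReal (B x - Φ (un n x))) atTop := by
      filter_upwards [hφB, hlimpt] with x hbx hlx
      have hbdd : IsBoundedUnder (· ≤ ·) atTop (fun n => Φ (un n x)) :=
        isBoundedUnder_of_eventually_le (Eventually.of_forall fun n => (abs_le.1 (hbx n)).2)
      have hcb : IsCoboundedUnder (· ≤ ·) atTop (fun n => Φ (un n x)) :=
        (isBoundedUnder_of_eventually_ge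
          (Eventually.of_forall fun n => (abs_le.1 (hbx n)).1)).isCoboundedUnder_le
      have hlim : liminf (fun n => B x - Φ (un n x)) atTop
          = B x - limsup (fun n => Φ (un n x)) atTop :=
        liminf_const_sub atTop (fun n => Φ (un n x)) (B x) hbdd hcb
      have h1 : B x - Φ (u x) ≤ liminf (fun n => B x - Φ (un n x)) atTop := by
        rw [hlim]; linarith
      have heq : ENNReal.ofReal (liminf (fun n => B x - Φ (un n x)) atTop)
          = liminf (fun n => ENNReal.ofReal (B x - Φ (un n x))) atTop := by
        refine Monotone.map_liminf_of_continuousAt (fun p q hpq => ENNReal.ofReal_le_ofReal hpq)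
          _ ENNReal.continuous_ofReal.continuousAt ?_ ?_
        · exact (isBoundedUnder_of_eventually_le (Eventually.of_forall fun n => by
            have := (abs_le.1 (hbx n)).1; linarith : ∀ᶠ n in atTop,
              B x - Φ (un n x) ≤ B x + B x)).isCoboundedUnder_ge
        · exact isBoundedUnder_of_eventually_ge (a := (0:ℝ)) (Eventually.of_forall fun n => by
            have := (abs_le.1 (hbx n)).2; linarith)
      calc ENNReal.ofReal (B x - Φ (u x))
          ≤ ENNReal.ofReal (liminf (fun n => B x - Φ (un n x)) atTop) :=
            ENNReal.ofReal_le_ofReal h1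
        _ = _ := heq
    have huΦ_nn : 0 ≤ᵐ[σ.restrict s] fun x => B x - Φ (u x) :=
      ae_restrict_of_ae (hΦuB.mono fun x hx => by simp only [Pi.zero_apply]; linarith)
    have hlhs : ENNReal.ofReal (∫ x in s, (B x - Φ (u x)) ∂σ)
        = ∫⁻ x in s, ENNReal.ofReal (B x - Φ (u x)) ∂σ :=
      ofReal_integral_eq_lintegral_ofReal (hBintOn.sub hΦuintOn) huΦ_nn
    have hfatou : ∫⁻ x in s, ENNReal.ofReal (B x - Φ (u x)) ∂σ
        ≤ liminf (fun n => ENNReal.ofReal (c n)) atTop := by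
      calc ∫⁻ x in s, ENNReal.ofReal (B x - Φ (u x)) ∂σ
          ≤ ∫⁻ x in s, liminf (fun n => ENNReal.ofReal (B x - Φ (un n x))) atTop ∂σ :=
            lintegral_mono_ae (ae_restrict_of_ae hpt)
        _ ≤ liminf (fun n => ∫⁻ x in s, ENNReal.ofReal (B x - Φ (un n x)) ∂σ) atTop :=
            lintegral_liminf_le' (fun n =>
              (ENNReal.measurable_ofReal.comp_aemeasurable
                ((hgint n).aestronglyMeasurable.aemeasurable)))
        _ = liminf (fun n => ENNReal.ofReal (c n)) atTop := by
            refine congrArg (fun z => liminf z atTop) ?_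
            funext n
            exact (hoR n).symm
    have hcnn : ∀ n, 0 ≤ c n := fun n => integral_nonneg_of_ae (hgnn n)
    have hcub : ∀ n, c n ≤ Ib + Ib := by
      intro n
      rw [hcdiff n]
      have := hstep3' n
      simp only [hIbdef] at *
      linarith
    have heqc : ENNReal.ofReal (liminf c atTop)
        = liminf (fun n => ENNReal.ofReal (c n)) atTop := by
      refine Monotone.map_liminf_of_continuousAt (fun p q hpq => ENNReal.ofReal_le_ofReal hpq)
        c ENNReal.continuous_ofReal.continuousAt ?_ ?_
      · exact (isBoundedUnder_of_eventually_le (Eventually.of_forall hcub)).isCoboundedUnder_ge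
      · exact isBoundedUnder_of_eventually_ge (Eventually.of_forall hcnn)
    have hlinn : 0 ≤ liminf c atTop :=
      le_liminf_of_le ((isBoundedUnder_of_eventually_le
        (Eventually.of_forall hcub)).isCoboundedUnder_ge) (Eventually.of_forall hcnn)
    have hreal : ∫ x in s, (B x - Φ (u x)) ∂σ ≤ liminf c atTop := by
      have h2 : ENNReal.ofReal (∫ x in s, (B x - Φ (u x)) ∂σ)
          ≤ ENNReal.ofReal (liminf c atTop) := by
        rw [hlhs, heqc]; exact hfatou
      exact (ENNReal.ofReal_le_ofReal_iff hlinn).1 h2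
    have h4 : ∫ x in s, (B x - Φ (u x)) ∂σ = Ib - ∫ x in s, Φ (u x) ∂σ :=
      integral_sub hBintOn hΦuintOn
    have h5 : liminf c atTop = Ib - limsup a atTop := by
      have hce : c = fun n => Ib - a n := funext hcdiff
      rw [hce]
      exact liminf_const_sub atTop a Ib hbddA hbddA'.isCoboundedUnder_le
    have hpart2 : limsup a atTop ≤ ∫ x in s, Φ (u x) ∂σ := by
      rw [h4, h5] at hreal
      linarith
    rw [integral_sub hΦuintOn (hξ_int.mul_const v).integrableOn]
    have : ∫ x in s, ξ x * v ∂σ ≤ ∫ x in s, Φ (u x) ∂σ := le_trans hpart1 hpart2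
    linarith
  have hfin := ae_nonneg_of_forall_setIntegral_nonneg
    (f := fun x => Φ (u x) - ξ x * v) (hΦu_int.sub (hξ_int.mul_const v)) hmain
  filter_upwards [hfin] with x hx
  simp only [Pi.zero_apply] at hx
  linarith

end ClarkeAux

/-- a.e. weak limits of subdifferential selections are selections
(Aubin–Cellina type convergence theorem). -/
theorem weak_limit_of_selections
    {Γ : Type*} [MeasurableSpace Γ] (σ : Measure Γ) [IsFiniteMeasure σ]
    (j : ℝ → ℝ) (hj : LocallyLipschitz j)
    (c₁ c₂ : ℝ) (hc₁ : 0 < c₁) (hc₂ : 0 < c₂)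
    (hgrowth : ∀ u ξ : ℝ, ξ ∈ clarkeSubdiff j u → |ξ| ≤ c₁ + c₂ * |u|)
    (un : ℕ → Lp ℝ 2 σ) (u : Lp ℝ 2 σ) (h : Lp ℝ 2 σ)
    (ξn : ℕ → Lp ℝ 2 σ) (ξ : Lp ℝ 2 σ)
    (hstrong : Tendsto un atTop (nhds u))
    (hae : ∀ᵐ x ∂σ, Tendsto (fun n => un n x) atTop (nhds (u x)))
    (hdom : ∀ n : ℕ, ∀ᵐ x ∂σ, |un n x| ≤ h x)
    (hweak : ∀ g : Lp ℝ 2 σ,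
      Tendsto (fun n => ∫ x, ξn n x * g x ∂σ) atTop (nhds (∫ x, ξ x * g x ∂σ)))
    (hsel : ∀ n : ℕ, ∀ᵐ x ∂σ, ξn n x ∈ clarkeSubdiff j (un n x)) :
    ∀ᵐ x ∂σ, ξ x ∈ clarkeSubdiff j (u x) := by
  have h1 := ClarkeAux.key σ j hj c₁ c₂ hc₂ hgrowth un u h ξn ξ hae hdom hweak hsel 1
  have hm1 := ClarkeAux.key σ j hj c₁ c₂ hc₂ hgrowth un u h ξn ξ hae hdom hweak hsel (-1)
  filter_upwards [h1, hm1] with x hx1 hx2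
  exact ClarkeAux.mem_of_pair j hj hx1 hx2
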